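/- Let n ≥ 4 and let a, b, p, q ∈ ℂⁿ be nonzero vectors such that either (a,a) = (a,b) = (b,b) = 0 or (p,p) = (p,q) = (q,q) = 0, where (u,v) = Σ_i u_i·v_i. Define the functions P, Q, R, S on SO(n) by P(x) = Σ_{j,α} p_j·a_α·x_{jα}, Q(x) = Σ_{k,β} q_k·b_β·x_{kβ}, R(x) = Σ_{j,β} p_j·b_β·x_{jβ}, S(x) = Σ_{k,α} q_k·a_α·x_{kα}. Then the following identities of functions on SO(n) hold: κ(P,P) = −(1/2)·P², κ(Q,Q) = −(1/2)·Q², κ(R,R) = −(1/2)·R², κ(S,S) = −(1/2)·S², κ(P,Q) = −(1/2)·R·S, κ(R,S) = −(1/2)·P·Q, κ(P,R) = −(1/2)·P·R, κ(P,S) = −(1/2)·P·S, κ(Q,R) = −(1/2)·Q·R, κ(Q,S) = −(1/2)·Q·S; that is, the conditions (PP-QQ) of the paper's general scheme hold on SO(n) with μ = −1/2. -/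

import Mathlib

open Matrix

/-- The matrix `Y_rs ∈ ℝ^{n×n}` with `(r,s)`-entry `1/√2`, `(s,r)`-entry `-1/√2` and
all other entries `0`; for `r < s` these form the canonical orthonormal basis of the
Lie algebra `so(n)`. -/
noncomputable def Yso (n : ℕ) (r s : Fin n) : Matrix (Fin n) (Fin n) ℝ :=
  (Real.sqrt 2)⁻¹ • (Matrix.single r s 1 - Matrix.single s r 1)

/-- The special orthogonal group `SO(n) = {x : x·xᵀ = 1, det x = 1}`. -/
def SOGroup (n : ℕ) : Set (Matrix (Fin n) (Fin n) ℝ) :=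
  {x | x * x.transpose = 1 ∧ x.det = 1}

/-- The conformality operator `κ(F,G)(x) = Σ_{r<s} F(x·Y_rs)·G(x·Y_rs)` on `SO(n)`
for complex-valued functions of the matrix entries. -/
noncomputable def kappaSO (n : ℕ) (F G : Matrix (Fin n) (Fin n) ℝ → ℂ)
    (x : Matrix (Fin n) (Fin n) ℝ) : ℂ :=
  ∑ r : Fin n, ∑ s : Fin n, if r < s then F (x * Yso n r s) * G (x * Yso n r s) else 0

lemma mul_yso_entry {n : ℕ} (x : Matrix (Fin n) (Fin n) ℝ) (r s j α : Fin n) :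
    (x * Yso n r s) j α
      = (Real.sqrt 2)⁻¹ * ((if s = α then x j r else 0) - (if r = α then x j s else 0)) := by
  simp only [Yso, Matrix.mul_apply, Matrix.smul_apply, Matrix.sub_apply,
    Matrix.single, Matrix.of_apply, smul_eq_mul, sub_mul, mul_sub,
    mul_ite, ite_mul, mul_zero, zero_mul, mul_one, one_mul, ite_and,
    Finset.sum_sub_distrib, Finset.sum_ite_eq, Finset.mem_univ, if_true]
  by_cases h1 : s = α <;> by_cases h2 : r = α <;> simp [h1, h2] <;> ring

lemma F_mul_yso {n : ℕ} (x : Matrix (Fin n) (Fin n) ℝ) (u v : Fin n → ℂ) (r s : Fin n) :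
    (∑ j : Fin n, ∑ α : Fin n, u j * v α * (((x * Yso n r s) j α : ℝ) : ℂ))
      = (((Real.sqrt 2)⁻¹ : ℝ) : ℂ) *
        (v s * (∑ j, u j * ((x j r : ℝ) : ℂ)) - v r * (∑ j, u j * ((x j s : ℝ) : ℂ))) := by
  simp only [mul_yso_entry]
  push_cast [apply_ite Complex.ofReal]
  simp only [Complex.ofReal_zero, mul_sub, mul_ite, mul_zero, Finset.sum_sub_distrib,
    Finset.sum_ite_eq, Finset.mem_univ, if_true, Finset.mul_sum]
  congr 1 <;> { refine Finset.sum_congr rfl fun j _ => ?_; ring }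

lemma half_sum {n : ℕ} (g : Fin n → Fin n → ℂ) (hsymm : ∀ r s, g r s = g s r)
    (hdiag : ∀ r, g r r = 0) :
    (∑ r : Fin n, ∑ s : Fin n, if r < s then g r s else 0)
      = (1 / 2 : ℂ) * ∑ r : Fin n, ∑ s : Fin n, g r s := by
  have h1 : (∑ r : Fin n, ∑ s : Fin n, g r s)
      = (∑ r : Fin n, ∑ s : Fin n, if r < s then g r s else 0)
        + (∑ r : Fin n, ∑ s : Fin n, if s < r then g r s else 0) := by
    rw [← Finset.sum_add_distrib]
    refine Finset.sum_congr rfl fun r _ => ?_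
    rw [← Finset.sum_add_distrib]
    refine Finset.sum_congr rfl fun s _ => ?_
    rcases lt_trichotomy r s with h | h | h
    · simp [h, not_lt_of_gt h]
    · simp [h, hdiag]
    · simp [h, not_lt_of_gt h]
  have h2 : (∑ r : Fin n, ∑ s : Fin n, if s < r then g r s else 0)
      = (∑ r : Fin n, ∑ s : Fin n, if r < s then g r s else 0) := by
    rw [Finset.sum_comm]
    exact Finset.sum_congr rfl fun r _ => Finset.sum_congr rfl fun s _ => by
      rw [hsymm]
  rw [h2] at h1
  rw [eq_comm] at h1
  linear_combination (1/2 : ℂ) * h1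

lemma kappa_formula {n : ℕ} (x : Matrix (Fin n) (Fin n) ℝ)
    (hx : x * x.transpose = 1) (u v u' v' : Fin n → ℂ) :
    kappaSO n (fun y => ∑ j : Fin n, ∑ α : Fin n, u j * v α * ((y j α : ℝ) : ℂ))
              (fun y => ∑ j : Fin n, ∑ α : Fin n, u' j * v' α * ((y j α : ℝ) : ℂ)) x
      = (1 / 2 : ℂ) * ((∑ i, v i * v' i) * (∑ i, u i * u' i)
          - (∑ j : Fin n, ∑ α : Fin n, u j * v' α * ((x j α : ℝ) : ℂ))
            * (∑ j : Fin n, ∑ α : Fin n, u' j * v α * ((x j α : ℝ) : ℂ))) := by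
  set c : ℂ := (((Real.sqrt 2)⁻¹ : ℝ) : ℂ) with hc
  set A : Fin n → ℂ := fun r => ∑ j, u j * ((x j r : ℝ) : ℂ) with hA
  set A' : Fin n → ℂ := fun r => ∑ j, u' j * ((x j r : ℝ) : ℂ) with hA'
  have hc2 : c * c = 1 / 2 := by
    rw [hc, ← Complex.ofReal_mul, ← mul_inv, Real.mul_self_sqrt (by norm_num : (0:ℝ) ≤ 2)]
    norm_num
  set g : Fin n → Fin n → ℂ :=
    fun r s => (v s * A r - v r * A s) * (v' s * A' r - v' r * A' s) with hg
  have hk : kappaSO n (fun y => ∑ j : Fin n, ∑ α : Fin n, u j * v α * ((y j α : ℝ) : ℂ))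
      (fun y => ∑ j : Fin n, ∑ α : Fin n, u' j * v' α * ((y j α : ℝ) : ℂ)) x
      = (1/2 : ℂ) * (∑ r : Fin n, ∑ s : Fin n, if r < s then g r s else 0) := by
    unfold kappaSO
    rw [Finset.mul_sum]
    refine Finset.sum_congr rfl fun r _ => ?_
    rw [Finset.mul_sum]
    refine Finset.sum_congr rfl fun s _ => ?_
    split_ifs
    · dsimp only
      rw [F_mul_yso, F_mul_yso, hg]; dsimp only
      calc c * (v s * A r - v r * A s) * (c * (v' s * A' r - v' r * A' s))
          = (c * c) * ((v s * A r - v r * A s) * (v' s * A' r - v' r * A' s)) := by ring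
        _ = _ := by rw [hc2]
    · ring
  rw [hk, half_sum g (fun r s => by rw [hg]; dsimp only; ring)
      (fun r => by rw [hg]; dsimp only; ring)]
  have hgsum : (∑ r : Fin n, ∑ s : Fin n, g r s)
      = 2 * ((∑ i, v i * v' i) * (∑ i, A i * A' i)
          - (∑ i, A i * v' i) * (∑ i, v i * A' i)) := by
    have hrow : ∀ r : Fin n, (∑ s : Fin n, g r s)
        = (A r * A' r) * (∑ i, v i * v' i) - (A r * v' r) * (∑ i, v i * A' i)
          - (v r * A' r) * (∑ i, A i * v' i) + (v r * v' r) * (∑ i, A i * A' i) := by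
      intro r
      simp only [Finset.mul_sum, ← Finset.sum_sub_distrib, ← Finset.sum_add_distrib]
      refine Finset.sum_congr rfl fun s _ => ?_
      rw [hg]; dsimp only; ring
    simp only [hrow]
    simp only [Finset.sum_add_distrib, Finset.sum_sub_distrib, ← Finset.sum_mul]
    ring
  have hAA : (∑ i, A i * A' i) = ∑ i, u i * u' i := by
    have horth : ∀ j k : Fin n, (∑ r : Fin n, ((x j r : ℝ) : ℂ) * ((x k r : ℝ) : ℂ))
        = if j = k then 1 else 0 := by
      intro j k
      have h := congrFun (congrFun hx j) k
      rw [Matrix.mul_apply] at h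
      simp only [Matrix.transpose_apply, Matrix.one_apply] at h
      calc (∑ r : Fin n, ((x j r : ℝ) : ℂ) * ((x k r : ℝ) : ℂ))
          = (((∑ r : Fin n, x j r * x k r : ℝ)) : ℂ) := by push_cast; rfl
        _ = _ := by rw [h]; split_ifs <;> simp
    calc (∑ i, A i * A' i)
        = ∑ i : Fin n, ∑ j : Fin n, ∑ k : Fin n,
            (u j * ((x j i : ℝ) : ℂ)) * (u' k * ((x k i : ℝ) : ℂ)) := by
          refine Finset.sum_congr rfl fun i _ => ?_
          rw [hA, hA']; dsimp only; rw [Finset.sum_mul_sum]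
      _ = ∑ j : Fin n, ∑ k : Fin n, (u j * u' k) *
            (∑ i : Fin n, ((x j i : ℝ) : ℂ) * ((x k i : ℝ) : ℂ)) := by
          rw [Finset.sum_comm]
          refine Finset.sum_congr rfl fun j _ => ?_
          rw [Finset.sum_comm]
          refine Finset.sum_congr rfl fun k _ => ?_
          rw [Finset.mul_sum]
          exact Finset.sum_congr rfl fun i _ => by ring
      _ = ∑ i, u i * u' i := by
          simp only [horth, mul_ite, mul_one, mul_zero, Finset.sum_ite_eq,
            Finset.mem_univ, if_true]
  have hAv' : (∑ i, A i * v' i)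
      = ∑ j : Fin n, ∑ α : Fin n, u j * v' α * ((x j α : ℝ) : ℂ) := by
    rw [Finset.sum_comm]
    refine Finset.sum_congr rfl fun i _ => ?_
    rw [hA]; dsimp only; rw [Finset.sum_mul]
    exact Finset.sum_congr rfl fun j _ => by ring
  have hvA' : (∑ i, v i * A' i)
      = ∑ j : Fin n, ∑ α : Fin n, u' j * v α * ((x j α : ℝ) : ℂ) := by
    rw [Finset.sum_comm]
    refine Finset.sum_congr rfl fun i _ => ?_
    rw [hA']; dsimp only; rw [Finset.mul_sum]
    exact Finset.sum_congr rfl fun j _ => by ring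
  rw [hgsum, hAA, hAv', hvA']
  ring

/-- Lemma 9.4: for `n ≥ 4` and nonzero `a, b, p, q ∈ ℂⁿ` with either
`(a,a) = (a,b) = (b,b) = 0` or `(p,p) = (p,q) = (q,q) = 0`, the functions
`P = Σ p_j a_α x_{jα}`, `Q = Σ q_k b_β x_{kβ}`, `R = Σ p_j b_β x_{jβ}`,
`S = Σ q_k a_α x_{kα}` satisfy the conditions (PP-QQ) on `SO(n)` with `μ = -1/2`. -/
theorem stmt_17 (n : ℕ) (hn : 4 ≤ n) (a b p q : Fin n → ℂ)
    (ha : a ≠ 0) (hb : b ≠ 0) (hp : p ≠ 0) (hq : q ≠ 0)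
    (hiso : ((∑ i, a i * a i) = 0 ∧ (∑ i, a i * b i) = 0 ∧ (∑ i, b i * b i) = 0) ∨
            ((∑ i, p i * p i) = 0 ∧ (∑ i, p i * q i) = 0 ∧ (∑ i, q i * q i) = 0))
    (P Q R S : Matrix (Fin n) (Fin n) ℝ → ℂ)
    (hPdef : P = fun x => ∑ j : Fin n, ∑ α : Fin n, p j * a α * (x j α : ℂ))
    (hQdef : Q = fun x => ∑ k : Fin n, ∑ β : Fin n, q k * b β * (x k β : ℂ))
    (hRdef : R = fun x => ∑ j : Fin n, ∑ β : Fin n, p j * b β * (x j β : ℂ))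
    (hSdef : S = fun x => ∑ k : Fin n, ∑ α : Fin n, q k * a α * (x k α : ℂ)) :
    ∀ x ∈ SOGroup n,
      kappaSO n P P x = -(1 / 2 : ℂ) * (P x) ^ 2 ∧
      kappaSO n Q Q x = -(1 / 2 : ℂ) * (Q x) ^ 2 ∧
      kappaSO n R R x = -(1 / 2 : ℂ) * (R x) ^ 2 ∧
      kappaSO n S S x = -(1 / 2 : ℂ) * (S x) ^ 2 ∧
      kappaSO n P Q x = -(1 / 2 : ℂ) * (R x * S x) ∧
      kappaSO n R S x = -(1 / 2 : ℂ) * (P x * Q x) ∧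
      kappaSO n P R x = -(1 / 2 : ℂ) * (P x * R x) ∧
      kappaSO n P S x = -(1 / 2 : ℂ) * (P x * S x) ∧
      kappaSO n Q R x = -(1 / 2 : ℂ) * (Q x * R x) ∧
      kappaSO n Q S x = -(1 / 2 : ℂ) * (Q x * S x) := by
  intro x hx
  have hx1 := hx.1
  simp only [hPdef, hQdef, hRdef, hSdef]
  rcases hiso with ⟨h1, h2, h3⟩ | ⟨h1, h2, h3⟩
  · have h2' : (∑ i, b i * a i) = 0 := by
      rw [show (∑ i, b i * a i) = ∑ i, a i * b i from
        Finset.sum_congr rfl fun i _ => mul_comm _ _]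
      exact h2
    refine ⟨?_, ?_, ?_, ?_, ?_, ?_, ?_, ?_, ?_, ?_⟩
    · rw [kappa_formula x hx1 p a p a]; linear_combination (1/2:ℂ) * (∑ i, p i * p i) * h1
    · rw [kappa_formula x hx1 q b q b]; linear_combination (1/2:ℂ) * (∑ i, q i * q i) * h3
    · rw [kappa_formula x hx1 p b p b]; linear_combination (1/2:ℂ) * (∑ i, p i * p i) * h3
    · rw [kappa_formula x hx1 q a q a]; linear_combination (1/2:ℂ) * (∑ i, q i * q i) * h1
    · rw [kappa_formula x hx1 p a q b]; linear_combination (1/2:ℂ) * (∑ i, p i * q i) * h2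
    · rw [kappa_formula x hx1 p b q a]; linear_combination (1/2:ℂ) * (∑ i, p i * q i) * h2'
    · rw [kappa_formula x hx1 p a p b]; linear_combination (1/2:ℂ) * (∑ i, p i * p i) * h2
    · rw [kappa_formula x hx1 p a q a]; linear_combination (1/2:ℂ) * (∑ i, p i * q i) * h1
    · rw [kappa_formula x hx1 q b p b]; linear_combination (1/2:ℂ) * (∑ i, q i * p i) * h3
    · rw [kappa_formula x hx1 q b q a]; linear_combination (1/2:ℂ) * (∑ i, q i * q i) * h2'
  · have h2' : (∑ i, q i * p i) = 0 := by
      rw [show (∑ i, q i * p i) = ∑ i, p i * q i from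
        Finset.sum_congr rfl fun i _ => mul_comm _ _]
      exact h2
    refine ⟨?_, ?_, ?_, ?_, ?_, ?_, ?_, ?_, ?_, ?_⟩
    · rw [kappa_formula x hx1 p a p a]; linear_combination (1/2:ℂ) * (∑ i, a i * a i) * h1
    · rw [kappa_formula x hx1 q b q b]; linear_combination (1/2:ℂ) * (∑ i, b i * b i) * h3
    · rw [kappa_formula x hx1 p b p b]; linear_combination (1/2:ℂ) * (∑ i, b i * b i) * h1
    · rw [kappa_formula x hx1 q a q a]; linear_combination (1/2:ℂ) * (∑ i, a i * a i) * h3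
    · rw [kappa_formula x hx1 p a q b]; linear_combination (1/2:ℂ) * (∑ i, a i * b i) * h2
    · rw [kappa_formula x hx1 p b q a]; linear_combination (1/2:ℂ) * (∑ i, b i * a i) * h2
    · rw [kappa_formula x hx1 p a p b]; linear_combination (1/2:ℂ) * (∑ i, a i * b i) * h1
    · rw [kappa_formula x hx1 p a q a]; linear_combination (1/2:ℂ) * (∑ i, a i * a i) * h2
    · rw [kappa_formula x hx1 q b p b]; linear_combination (1/2:ℂ) * (∑ i, b i * b i) * h2'
    · rw [kappa_formula x hx1 q b q a]; linear_combination (1/2:ℂ) * (∑ i, b i * a i) * h3
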